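/- Every finitely generated differential subfield E of F_∞ containing F is contained in an iterated Picard–Vessiot extension of F inside F_∞. -/

import Mathlib

/-- A derivation on a field, given as a bare function. -/
structure IsDeriv {K : Type*} [Field K] (d : K → K) : Prop where
  map_add : ∀ a b : K, d (a + b) = d a + d b
  leibniz : ∀ a b : K, d (a * b) = a * d b + d a * b

variable {K : Type*} [Field K]

/-- A subfield is a differential subfield if it is stable under the derivation. -/
def DStable (d : K → K) (E : Subfield K) : Prop := ∀ x ∈ E, d x ∈ E

/-- `y` is a solution of the monic linear homogeneous ODE
`Y⁽ⁿ⁾ + a_{n-1} Y⁽ⁿ⁻¹⁾ + ⋯ + a_0 Y = 0`. -/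
def IsSol (d : K → K) {n : ℕ} (a : Fin n → K) (y : K) : Prop :=
  d^[n] y + ∑ i : Fin n, a i * d^[(i : ℕ)] y = 0

/-- The family `v` is linearly independent over the constants. -/
def LinIndepConst (d : K → K) {n : ℕ} (v : Fin n → K) : Prop :=
  ∀ c : Fin n → K, (∀ i, d (c i) = 0) → ∑ i, c i * v i = 0 → ∀ i, c i = 0

/-- The ODE with coefficients `a` has a full set of solutions inside `T`. -/
def FullSolutionsIn (d : K → K) {n : ℕ} (a : Fin n → K) (T : Set K) : Prop :=
  ∃ v : Fin n → K, (∀ i, v i ∈ T) ∧ (∀ i, IsSol d a (v i)) ∧ LinIndepConst d v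

/-- The (differential) subfield generated by a set: the subfield generated by the
set together with all of its iterated derivatives. -/
def DiffGen (d : K → K) (A : Set K) : Subfield K :=
  Subfield.closure (⋃ k, d^[k] '' A)

/-- `M` is a Picard–Vessiot extension of `E` (for some monic linear operator `L`):
no new constants, and `M` is generated over `E` by a full set of solutions of `L`. -/
def IsPV (d : K → K) (E M : Subfield K) : Prop :=
  E ≤ M ∧ (∀ x ∈ M, d x = 0 → x ∈ E) ∧
  ∃ (n : ℕ) (a v : Fin n → K), (∀ i, a i ∈ E) ∧ (∀ i, v i ∈ M) ∧
    (∀ i, IsSol d a (v i)) ∧ LinIndepConst d v ∧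
    M ≤ DiffGen d (↑E ∪ Set.range v)

/-- `E` is an iterated Picard–Vessiot extension of `F`: there is a finite defining
tower of Picard–Vessiot steps from `F` to `E`. -/
def IsIPV (d : K → K) (F E : Subfield K) : Prop :=
  ∃ (n : ℕ) (T : Fin (n + 1) → Subfield K), T 0 = F ∧ T (Fin.last n) = E ∧
    ∀ i : Fin n, IsPV d (T i.castSucc) (T i.succ)

/-- `E` is a locally iterated Picard–Vessiot extension of `F`: every finite subset
of `E` lies in an iterated Picard–Vessiot subextension. -/
def IsLIPV (d : K → K) (F E : Subfield K) : Prop :=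
  F ≤ E ∧ ∀ X : Finset K, ↑X ⊆ (E : Set K) → ∃ M : Subfield K,
    M ≤ E ∧ IsIPV d F M ∧ ↑X ⊆ (M : Set K)

/-- `E₁` is a Picard–Vessiot closure of `E`: a no-new-constants extension in which every
linear homogeneous ODE over `E` has a full set of solutions, generated by such solutions. -/
def IsPVClosure (d : K → K) (E E₁ : Subfield K) : Prop :=
  E ≤ E₁ ∧ (∀ x ∈ E₁, d x = 0 → x ∈ E) ∧
  (∀ (n : ℕ) (a : Fin n → K), (∀ i, a i ∈ E) → FullSolutionsIn d a E₁) ∧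
  E₁ ≤ DiffGen d (↑E ∪ {y | y ∈ E₁ ∧ ∃ (n : ℕ) (a : Fin n → K), (∀ i, a i ∈ E) ∧ IsSol d a y})

/-- A tower of iterated Picard–Vessiot closures `F = F₀ ⊆ F₁ ⊆ F₂ ⊆ ⋯`. -/
def IsPVTower (d : K → K) (Fi : ℕ → Subfield K) : Prop :=
  ∀ i, IsPVClosure d (Fi i) (Fi (i + 1))

/-- The field of constants is algebraically closed. -/
def ConstAlgClosed (d : K → K) : Prop :=
  ∀ p : Polynomial K, 0 < p.degree → (∀ n, d (p.coeff n) = 0) → ∃ x, d x = 0 ∧ p.eval x = 0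

/-- `σ` is a differential automorphism over `F`. -/
def IsDiffAutOver (d : K → K) (F : Subfield K) (σ : K ≃+* K) : Prop :=
  (∀ x, σ (d x) = d (σ x)) ∧ ∀ x ∈ F, σ x = x


section PVAux
variable {K : Type*} [Field K]

namespace IsDeriv
variable {d : K → K} (hd : IsDeriv d)
include hd

lemma zero' : d 0 = 0 := by
  have := hd.map_add 0 0; simp at this; exact this

lemma one' : d 1 = 0 := by
  have := hd.leibniz 1 1; simp at this; linear_combination this

lemma neg' (x : K) : d (-x) = - d x := by
  have := hd.map_add x (-x); simp [hd.zero'] at this; linear_combination -this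

lemma sum' {ι : Type*} (s : Finset ι) (f : ι → K) :
    d (∑ i ∈ s, f i) = ∑ i ∈ s, d (f i) :=
  map_sum (AddMonoidHom.mk' d hd.map_add) f s

lemma inv' (x : K) (hx : x ≠ 0) : d x⁻¹ = -(d x * x⁻¹ * x⁻¹) := by
  have h1 : x * x⁻¹ = 1 := mul_inv_cancel₀ hx
  have h2 := hd.leibniz x x⁻¹
  rw [h1, hd.one'] at h2
  have h3 : x * d x⁻¹ = -(d x * x⁻¹) := by linear_combination -h2
  calc d x⁻¹ = x⁻¹ * (x * d x⁻¹) := by field_simp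
    _ = x⁻¹ * (-(d x * x⁻¹)) := by rw [h3]
    _ = -(d x * x⁻¹ * x⁻¹) := by ring

lemma const_add {a b : K} (ha : d a = 0) (hb : d b = 0) : d (a + b) = 0 := by
  rw [hd.map_add, ha, hb, add_zero]

lemma const_mul' {a b : K} (ha : d a = 0) (hb : d b = 0) : d (a * b) = 0 := by
  rw [hd.leibniz, ha, hb]; ring

lemma const_inv {a : K} (ha : d a = 0) : d a⁻¹ = 0 := by
  rcases eq_or_ne a 0 with h | h
  · simp [h, hd.zero']
  · rw [hd.inv' a h, ha]; ring

lemma const_neg {a : K} (ha : d a = 0) : d (-a) = 0 := by rw [hd.neg', ha, neg_zero]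

/-- Any solution is a constant-linear combination of a full (lin. indep.) system. -/
lemma solution_dependence {n : ℕ} {a v : Fin n → K}
    (hv : ∀ i, IsSol d a (v i)) (hli : LinIndepConst d v)
    {y : K} (hy : IsSol d a y) :
    ∃ c : Fin n → K, (∀ i, d (c i) = 0) ∧ y = ∑ i, c i * v i := by
  classical
  rcases Nat.eq_zero_or_pos n with hn0 | hnpos
  · subst hn0
    refine ⟨fun i => 0, fun i => hd.zero', ?_⟩
    have : y = 0 := by simpa [IsSol] using hy
    simp [this]
  set u : Fin (n + 1) → K := Fin.snoc v y with hu
  have husol : ∀ i, IsSol d a (u i) := by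
    intro i
    refine Fin.lastCases ?_ ?_ i
    · simpa [hu, Fin.snoc_last] using hy
    · intro j; simpa [hu, Fin.snoc_castSucc] using hv j
  set W : Fin (n + 1) → (Fin n → K) := fun i j => d^[(j : ℕ)] (u i) with hW
  -- the n+1 vectors W i are linearly dependent over K
  have hdep : ∃ g : Fin (n + 1) → K, ∑ i, g i • W i = 0 ∧ ∃ i, g i ≠ 0 := by
    by_contra hcon
    push_neg at hcon
    have hli' : LinearIndependent K W := by
      rw [Fintype.linearIndependent_iff]
      intro g hg
      exact hcon g hg
    have := hli'.fintype_card_le_finrank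
    simp [Module.finrank_fin_fun] at this
  -- choose a dependency with minimal support
  set A : Set ℕ := {m | ∃ g : Fin (n + 1) → K, (∑ i, g i • W i = 0) ∧ (∃ i, g i ≠ 0) ∧
      (Finset.univ.filter fun i => g i ≠ 0).card = m} with hA
  have hAne : A.Nonempty := by
    obtain ⟨g, hg1, hg2⟩ := hdep
    exact ⟨_, g, hg1, hg2, rfl⟩
  obtain ⟨c, hcsum, ⟨i0, hi0⟩, hccard⟩ := Nat.sInf_mem hAne
  have hmin : ∀ g : Fin (n + 1) → K, (∑ i, g i • W i = 0) → (∃ i, g i ≠ 0) →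
      sInf A ≤ (Finset.univ.filter fun i => g i ≠ 0).card := by
    intro g h1 h2
    exact Nat.sInf_le ⟨g, h1, h2, rfl⟩
  -- coordinate equations
  have hcoord : ∀ m : ℕ, m < n → ∑ i, c i * d^[m] (u i) = 0 := by
    intro m hm
    have := congrFun hcsum ⟨m, hm⟩
    simpa [W, Finset.sum_apply] using this
  have htopeq : ∑ i, c i * d^[n] (u i) = 0 := by
    have hsol : ∀ i, d^[n] (u i) = -∑ k : Fin n, a k * d^[(k : ℕ)] (u i) := by
      intro i
      have := husol i
      rw [IsSol] at this
      linear_combination this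
    calc ∑ i, c i * d^[n] (u i)
        = ∑ i, c i * (-∑ k : Fin n, a k * d^[(k : ℕ)] (u i)) := by
          refine Finset.sum_congr rfl fun i _ => by rw [hsol i]
      _ = -∑ k : Fin n, a k * (∑ i, c i * d^[(k : ℕ)] (u i)) := by
          have hexp : ∀ i : Fin (n+1), c i * (-∑ k : Fin n, a k * d^[(k : ℕ)] (u i))
              = ∑ k : Fin n, -(a k * (c i * d^[(k : ℕ)] (u i))) := by
            intro i
            rw [mul_neg, Finset.mul_sum, ← Finset.sum_neg_distrib]
            exact Finset.sum_congr rfl fun k _ => by ring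
          have h1 : ∑ i, c i * (-∑ k : Fin n, a k * d^[(k : ℕ)] (u i))
              = ∑ i, ∑ k : Fin n, -(a k * (c i * d^[(k : ℕ)] (u i))) :=
            Finset.sum_congr rfl fun i _ => hexp i
          have h2 : ∑ i : Fin (n+1), ∑ k : Fin n, -(a k * (c i * d^[(k : ℕ)] (u i)))
              = ∑ k : Fin n, ∑ i : Fin (n+1), -(a k * (c i * d^[(k : ℕ)] (u i))) :=
            Finset.sum_comm
          have h3 : ∀ k : Fin n, ∑ i : Fin (n+1), -(a k * (c i * d^[(k : ℕ)] (u i)))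
              = -(a k * ∑ i, c i * d^[(k : ℕ)] (u i)) := by
            intro k
            rw [Finset.mul_sum, ← Finset.sum_neg_distrib]
          rw [h1, h2, Finset.sum_congr rfl fun k _ => h3 k, Finset.sum_neg_distrib]
      _ = 0 := by
          rw [← neg_zero]
          congr 1
          refine Finset.sum_eq_zero fun k _ => ?_
          rw [hcoord k k.2, mul_zero]
  have hder : ∀ m : ℕ, m < n → ∑ i, d (c i) * d^[m] (u i) = 0 := by
    intro m hm
    have h1 : d (∑ i, c i * d^[m] (u i)) = 0 := by rw [hcoord m hm, hd.zero']
    rw [hd.sum'] at h1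
    have h2 : ∀ i : Fin (n+1), d (c i * d^[m] (u i)) =
        c i * d^[m+1] (u i) + d (c i) * d^[m] (u i) := by
      intro i
      rw [hd.leibniz, ← Function.iterate_succ_apply' d m]
    rw [Finset.sum_congr rfl fun i _ => h2 i, Finset.sum_add_distrib] at h1
    have h3 : ∑ i, c i * d^[m+1] (u i) = 0 := by
      rcases Nat.lt_or_ge (m+1) n with h | h
      · exact hcoord (m+1) h
      · have : m + 1 = n := le_antisymm hm h
        rw [this]; exact htopeq
    rw [h3, zero_add] at h1
    exact h1
  -- the modified dependency has smaller support, hence vanishes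
  have hkey : ∀ i, d (c i) * c i0 - c i * d (c i0) = 0 := by
    by_contra hcon
    push_neg at hcon
    obtain ⟨i1, hi1⟩ := hcon
    set e : Fin (n+1) → K := fun i => d (c i) * c i0 - c i * d (c i0) with he
    have hesum : ∑ i, e i • W i = 0 := by
      funext j
      have h1 := hder (j : ℕ) j.2
      have h2 := hcoord (j : ℕ) j.2
      simp only [Finset.sum_apply, Pi.zero_apply, Pi.smul_apply, smul_eq_mul, he, W]
      calc ∑ i, (d (c i) * c i0 - c i * d (c i0)) * d^[(j:ℕ)] (u i)
          = c i0 * (∑ i, d (c i) * d^[(j:ℕ)] (u i))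
            - d (c i0) * (∑ i, c i * d^[(j:ℕ)] (u i)) := by
            rw [Finset.mul_sum, Finset.mul_sum, ← Finset.sum_sub_distrib]
            exact Finset.sum_congr rfl fun i _ => by ring
        _ = 0 := by rw [h1, h2]; ring
    have hsub : (Finset.univ.filter fun i => e i ≠ 0) ⊆
        (Finset.univ.filter fun i => c i ≠ 0).erase i0 := by
      intro i hi
      simp only [Finset.mem_filter, Finset.mem_univ, true_and] at hi
      rw [Finset.mem_erase]
      constructor
      · rintro rfl
        apply hi
        simp only [he]
        ring
      · simp only [Finset.mem_filter, Finset.mem_univ, true_and]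
        intro hci
        apply hi
        simp only [he]
        rw [hci, hd.zero']
        ring
    have hlt : ((Finset.univ.filter fun i => e i ≠ 0)).card
        < (Finset.univ.filter fun i => c i ≠ 0).card := by
      calc ((Finset.univ.filter fun i => e i ≠ 0)).card
          ≤ ((Finset.univ.filter fun i => c i ≠ 0).erase i0).card :=
            Finset.card_le_card hsub
        _ < (Finset.univ.filter fun i => c i ≠ 0).card := by
            refine Finset.card_erase_lt_of_mem ?_
            simp [hi0]
    have := hmin e hesum ⟨i1, hi1⟩
    omega
  -- normalize to constants
  set b : Fin (n+1) → K := fun i => c i * (c i0)⁻¹ with hb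
  have hbconst : ∀ i, d (b i) = 0 := by
    intro i
    have hk := hkey i
    rw [hb]
    rw [hd.leibniz, hd.inv' _ hi0]
    have hci : d (c i) = c i * d (c i0) * (c i0)⁻¹ := by
      field_simp
      linear_combination hk
    rw [hci]
    field_simp
    ring
  have hbsum : ∑ i, b i * u i = 0 := by
    have h0 := hcoord 0 hnpos
    simp only [Function.iterate_zero_apply] at h0
    calc ∑ i, b i * u i = (c i0)⁻¹ * ∑ i, c i * u i := by
          rw [Finset.mul_sum]; exact Finset.sum_congr rfl fun i _ => by rw [hb]; ring
      _ = 0 := by rw [h0, mul_zero]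
  have hbi0 : b i0 = 1 := by rw [hb]; field_simp
  -- split off the last coordinate
  have hsplit : ∑ i : Fin n, b i.castSucc * v i + b (Fin.last n) * y = 0 := by
    have := hbsum
    rw [Fin.sum_univ_castSucc] at this
    simpa [hu, Fin.snoc_castSucc, Fin.snoc_last] using this
  have hblast : b (Fin.last n) ≠ 0 := by
    intro h0
    have hz : ∑ i : Fin n, b i.castSucc * v i = 0 := by
      rw [h0, zero_mul, add_zero] at hsplit; exact hsplit
    have hall := hli (fun i => b i.castSucc) (fun i => hbconst _) hz
    have : ∀ i : Fin (n+1), b i = 0 := by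
      intro i
      refine Fin.lastCases h0 (fun j => hall j) i
    rw [this i0] at hbi0
    exact one_ne_zero hbi0.symm
  refine ⟨fun i => -(b (Fin.last n))⁻¹ * b i.castSucc, ?_, ?_⟩
  · intro i
    exact hd.const_mul' (hd.const_neg (hd.const_inv (hbconst _))) (hbconst _)
  · have : b (Fin.last n) * y = -∑ i : Fin n, b i.castSucc * v i := by
      linear_combination hsplit
    calc y = (b (Fin.last n))⁻¹ * (b (Fin.last n) * y) := by field_simp
      _ = (b (Fin.last n))⁻¹ * (-∑ i : Fin n, b i.castSucc * v i) := by rw [this]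
      _ = ∑ i, -(b (Fin.last n))⁻¹ * b i.castSucc * v i := by
          rw [mul_neg, Finset.mul_sum, ← Finset.sum_neg_distrib]
          exact Finset.sum_congr rfl fun i _ => by ring

end IsDeriv


variable {d : K → K}

/-- The differential subfield generated by a set is stable under the derivation. -/
lemma diffGen_dstable (hd : IsDeriv d) (A : Set K) : DStable d (DiffGen d A) := by
  intro x hx
  rw [DiffGen] at hx ⊢
  induction hx using Subfield.closure_induction with
  | mem x hx =>
    apply Subfield.subset_closure
    obtain ⟨s, ⟨k, rfl⟩, a, ha, rfl⟩ := hx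
    exact Set.mem_iUnion.2 ⟨k + 1, a, ha, Function.iterate_succ_apply' d k a⟩
  | one => rw [hd.one']; exact zero_mem _
  | add x y hx hy ihx ihy => rw [hd.map_add]; exact add_mem ihx ihy
  | neg x hx ihx => rw [hd.neg']; exact neg_mem ihx
  | inv x hx ihx =>
    rcases eq_or_ne x 0 with h | h
    · simp only [h, inv_zero]; rw [hd.zero']; exact zero_mem _
    · rw [hd.inv' x h]
      exact neg_mem (mul_mem (mul_mem ihx (inv_mem hx)) (inv_mem hx))
  | mul x y hx hy ihx ihy =>
    rw [hd.leibniz]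
    exact add_mem (mul_mem hx ihy) (mul_mem ihx hy)

lemma subset_diffGen (A : Set K) : A ⊆ (DiffGen d A : Set K) := fun a ha =>
  Subfield.subset_closure (Set.mem_iUnion.2 ⟨0, a, ha, rfl⟩)

lemma dstable_iterate {M : Subfield K} (hM : DStable d M) :
    ∀ (k : ℕ) (x : K), x ∈ M → d^[k] x ∈ M := by
  intro k
  induction k with
  | zero => exact fun x hx => hx
  | succ k ih => intro x hx
                 rw [Function.iterate_succ_apply']
                 exact hM _ (ih x hx)

lemma diffGen_le {A : Set K} {M : Subfield K} (hA : A ⊆ (M : Set K)) (hM : DStable d M) :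
    DiffGen d A ≤ M := by
  rw [DiffGen, Subfield.closure_le]
  rintro x ⟨s, ⟨k, rfl⟩, a, ha, rfl⟩
  exact dstable_iterate hM k a (hA ha)

/-- Adding a full system of solutions as a PV step. -/
lemma isPV_diffGen {E : Subfield K} (hconst : ∀ x, d x = 0 → x ∈ E)
    {n : ℕ} {a v : Fin n → K} (ha : ∀ i, a i ∈ E) (hsol : ∀ i, IsSol d a (v i))
    (hli : LinIndepConst d v) :
    IsPV d E (DiffGen d (↑E ∪ Set.range v)) := by
  refine ⟨fun x hx => subset_diffGen _ (Set.mem_union_left _ hx),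
    fun x _ hx => hconst x hx, n, a, v, ha,
    fun i => subset_diffGen _ (Set.mem_union_right _ ⟨i, rfl⟩), hsol, hli, le_rfl⟩

/-- The trivial PV step: passing to the generated differential subfield. -/
lemma isPV_triv {E : Subfield K} (hconst : ∀ x, d x = 0 → x ∈ E) :
    IsPV d E (DiffGen d (↑E : Set K)) := by
  have h := isPV_diffGen (d := d) hconst (n := 0) (a := fun i => Fin.elim0 i)
    (v := fun i => Fin.elim0 i) (fun i => Fin.elim0 i) (fun i => Fin.elim0 i) (fun c _ _ i => Fin.elim0 i)
  have he : ((↑E : Set K) ∪ Set.range (fun i : Fin 0 => Fin.elim0 i)) = (↑E : Set K) := by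
    rw [Set.range_eq_empty, Set.union_empty]
  rwa [he] at h

lemma isIPV_refl (F : Subfield K) : IsIPV d F F :=
  ⟨0, fun _ => F, rfl, rfl, fun i => i.elim0⟩

lemma IsIPV_step {F E M : Subfield K} (h1 : IsIPV d F E) (h2 : IsPV d E M) :
    IsIPV d F M := by
  obtain ⟨n, T, h0, hl, hstep⟩ := h1
  refine ⟨n + 1, Fin.snoc T M, ?_, ?_, ?_⟩
  · rw [show (0 : Fin (n + 2)) = Fin.castSucc 0 by rfl, Fin.snoc_castSucc]
    exact h0
  · exact Fin.snoc_last _ _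
  · intro i
    refine Fin.lastCases ?_ ?_ i
    · rw [Fin.succ_last, Fin.snoc_last, Fin.snoc_castSucc, hl]
      exact h2
    · intro j
      rw [Fin.succ_castSucc, Fin.snoc_castSucc, Fin.snoc_castSucc]
      exact hstep j

/-- Compactness for subfield closures. -/
lemma exists_finset_of_mem_closure {s : Set K} {x : K} (hx : x ∈ Subfield.closure s) :
    ∃ T : Finset K, ↑T ⊆ s ∧ x ∈ Subfield.closure (T : Set K) := by
  classical
  induction hx using Subfield.closure_induction with
  | mem x hx => exact ⟨{x}, by simpa using hx, Subfield.subset_closure (by simp)⟩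
  | one => exact ⟨∅, by simp, one_mem _⟩
  | add x y hx hy ihx ihy =>
    obtain ⟨T1, hT1, h1⟩ := ihx
    obtain ⟨T2, hT2, h2⟩ := ihy
    refine ⟨T1 ∪ T2, by simp [hT1, hT2], ?_⟩
    have e1 : Subfield.closure (T1 : Set K) ≤ Subfield.closure ((T1 ∪ T2 : Finset K) : Set K) :=
      Subfield.closure_mono (by simp [Finset.coe_union])
    have e2 : Subfield.closure (T2 : Set K) ≤ Subfield.closure ((T1 ∪ T2 : Finset K) : Set K) :=
      Subfield.closure_mono (by simp [Finset.coe_union])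
    exact add_mem (e1 h1) (e2 h2)
  | neg x hx ihx => obtain ⟨T, hT, h⟩ := ihx; exact ⟨T, hT, neg_mem h⟩
  | inv x hx ihx => obtain ⟨T, hT, h⟩ := ihx; exact ⟨T, hT, inv_mem h⟩
  | mul x y hx hy ihx ihy =>
    obtain ⟨T1, hT1, h1⟩ := ihx
    obtain ⟨T2, hT2, h2⟩ := ihy
    refine ⟨T1 ∪ T2, by simp [hT1, hT2], ?_⟩
    have e1 : Subfield.closure (T1 : Set K) ≤ Subfield.closure ((T1 ∪ T2 : Finset K) : Set K) :=
      Subfield.closure_mono (by simp [Finset.coe_union])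
    have e2 : Subfield.closure (T2 : Set K) ≤ Subfield.closure ((T1 ∪ T2 : Finset K) : Set K) :=
      Subfield.closure_mono (by simp [Finset.coe_union])
    exact mul_mem (e1 h1) (e2 h2)



lemma pv_step_aux {d : K → K} (hd : IsDeriv d) {F0 FN : Subfield K}
    (hconst : ∀ x : K, d x = 0 → x ∈ F0)
    (hfull : ∀ (n : ℕ) (a : Fin n → K), (∀ i, a i ∈ FN) →
      ∃ v : Fin n → K, (∀ i, IsSol d a (v i)) ∧ LinIndepConst d v)
    (S : Finset K) :
    ∀ M : Subfield K, F0 ≤ M → IsIPV d F0 M → DStable d M →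
      (∀ g ∈ S, g ∈ M ∨ ∃ (n : ℕ) (a : Fin n → K), (∀ i, a i ∈ FN) ∧
        (∀ i, a i ∈ M) ∧ IsSol d a g) →
      ∃ M' : Subfield K, M ≤ M' ∧ IsIPV d F0 M' ∧ DStable d M' ∧ ↑S ⊆ (M' : Set K) := by
  classical
  induction S using Finset.induction_on with
  | empty => intro M _ h2 h3 _; exact ⟨M, le_rfl, h2, h3, by simp⟩
  | @insert g S _ ih =>
    intro M hF0 hipv hst hsol
    rcases hsol g (Finset.mem_insert_self g S) with hgM | ⟨n, a, haFN, haM, hg⟩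
    · obtain ⟨M', h1, h2, h3, h4⟩ := ih M hF0 hipv hst
        (fun g' hg' => hsol g' (Finset.mem_insert_of_mem hg'))
      refine ⟨M', h1, h2, h3, ?_⟩
      rw [Finset.coe_insert]
      exact Set.insert_subset (h1 hgM) h4
    · obtain ⟨v, hvsol, hvli⟩ := hfull n a haFN
      set M1 := DiffGen d (↑M ∪ Set.range v) with hM1
      have hMM1 : M ≤ M1 := fun x hx => subset_diffGen _ (Set.mem_union_left _ hx)
      have hPV : IsPV d M M1 :=
        isPV_diffGen (fun x hx => hF0 (hconst x hx)) haM hvsol hvli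
      have hipv1 : IsIPV d F0 M1 := IsIPV_step hipv hPV
      have hst1 : DStable d M1 := diffGen_dstable hd _
      have hgM1 : g ∈ M1 := by
        obtain ⟨c, hc, hy⟩ := hd.solution_dependence hvsol hvli hg
        rw [hy]
        exact sum_mem fun i _ =>
          mul_mem (hMM1 (hF0 (hconst _ (hc i))))
            (subset_diffGen _ (Set.mem_union_right _ ⟨i, rfl⟩))
      obtain ⟨M', h1, h2, h3, h4⟩ := ih M1 (le_trans hF0 hMM1) hipv1 hst1
        (fun g' hg' => by
          rcases hsol g' (Finset.mem_insert_of_mem hg') with h | ⟨n', a', h1', h2', h3'⟩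
          · exact Or.inl (hMM1 h)
          · exact Or.inr ⟨n', a', h1', fun i => hMM1 (h2' i), h3'⟩)
      refine ⟨M', le_trans hMM1 h1, h2, h3, ?_⟩
      rw [Finset.coe_insert]
      exact Set.insert_subset (h1 hgM1) h4

lemma pv_main_aux {Ω : Type*} [Field Ω] (D : Ω → Ω) (hD : IsDeriv D)
    (Fi : ℕ → Subfield Ω) (htow : IsPVTower D Fi)
    (hconst : ∀ x : Ω, D x = 0 → x ∈ Fi 0) :
    ∀ (N : ℕ) (X : Finset Ω), ↑X ⊆ (Fi N : Set Ω) →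
      ∃ M : Subfield Ω, Fi 0 ≤ M ∧ IsIPV D (Fi 0) M ∧ ↑X ⊆ (M : Set Ω) ∧ DStable D M := by
  classical
  intro N
  induction N with
  | zero =>
    intro X hX
    refine ⟨DiffGen D ↑(Fi 0), fun x hx => subset_diffGen _ hx, ?_, ?_, diffGen_dstable hD _⟩
    · exact IsIPV_step (isIPV_refl _) (isPV_triv hconst)
    · exact fun x hx => subset_diffGen _ (hX hx)
  | succ N ihN =>
    intro X hX
    have hcl := htow N
    have h4 : Fi (N+1) ≤ DiffGen D (↑(Fi N) ∪
        {y | y ∈ Fi (N+1) ∧ ∃ (n : ℕ) (a : Fin n → Ω), (∀ i, a i ∈ Fi N) ∧ IsSol D a y}) :=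
      hcl.2.2.2
    set Sols : Set Ω :=
      {y | y ∈ Fi (N+1) ∧ ∃ (n : ℕ) (a : Fin n → Ω), (∀ i, a i ∈ Fi N) ∧ IsSol D a y}
      with hSols
    have hTx : ∀ x ∈ X, ∃ T : Finset Ω,
        ↑T ⊆ (⋃ k, D^[k] '' (↑(Fi N) ∪ Sols)) ∧ x ∈ Subfield.closure (T : Set Ω) :=
      fun x hx => exists_finset_of_mem_closure (h4 (hX hx))
    choose T hT1 hT2 using hTx
    set Tall : Finset Ω := X.attach.biUnion (fun x => T x.1 x.2) with hTall
    have hTallG : ↑Tall ⊆ (⋃ k, D^[k] '' (↑(Fi N) ∪ Sols)) := by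
      intro t ht
      simp only [hTall, Finset.coe_biUnion, Set.mem_iUnion, Finset.mem_coe] at ht
      obtain ⟨x, -, h⟩ := ht
      exact hT1 x.1 x.2 h
    have hbase : ∀ t ∈ Tall, ∃ (g : Ω) (k : ℕ), (g ∈ (↑(Fi N) ∪ Sols : Set Ω)) ∧
        t = D^[k] g := by
      intro t ht
      obtain ⟨s, ⟨k, rfl⟩, g, hg, rfl⟩ := hTallG (Finset.mem_coe.2 ht)
      exact ⟨g, k, hg, rfl⟩
    choose gf kf hgf1 hgf2 using hbase
    set Base : Finset Ω := Tall.attach.image (fun t => gf t.1 t.2) with hBase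
    have hdata : ∀ b ∈ Base, ∃ C : Finset Ω, ↑C ⊆ (Fi N : Set Ω) ∧
        (b ∈ C ∨ ∃ (n : ℕ) (a : Fin n → Ω), (∀ i, a i ∈ Fi N) ∧
          (∀ i, a i ∈ C) ∧ IsSol D a b) := by
      intro b hb
      have hbmem : b ∈ (↑(Fi N) ∪ Sols : Set Ω) := by
        rw [hBase] at hb
        simp only [Finset.mem_image, Finset.mem_attach, true_and] at hb
        obtain ⟨t, rfl⟩ := hb
        exact hgf1 t.1 t.2
      rcases hbmem with h | h
      · exact ⟨{b}, by simpa using h, Or.inl (Finset.mem_singleton_self b)⟩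
      · obtain ⟨-, n, a, ha, hsol⟩ := h
        refine ⟨Finset.univ.image a, ?_,
          Or.inr ⟨n, a, ha, fun i => Finset.mem_image_of_mem a (Finset.mem_univ i), hsol⟩⟩
        intro z hz
        simp only [Finset.coe_image, Finset.coe_univ, Set.image_univ, Set.mem_range] at hz
        obtain ⟨i, rfl⟩ := hz
        exact ha i
    choose Cf hCf1 hCf2 using hdata
    set Call : Finset Ω := Base.attach.biUnion (fun b => Cf b.1 b.2) with hCall
    have hCallFN : ↑Call ⊆ (Fi N : Set Ω) := by
      intro z hz
      simp only [hCall, Finset.coe_biUnion, Set.mem_iUnion, Finset.mem_coe] at hz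
      obtain ⟨b, -, h⟩ := hz
      exact hCf1 b.1 b.2 h
    obtain ⟨M0, hM0F, hM0ipv, hM0C, hM0st⟩ := ihN Call hCallFN
    have hfull : ∀ (n : ℕ) (a : Fin n → Ω), (∀ i, a i ∈ Fi N) →
        ∃ v : Fin n → Ω, (∀ i, IsSol D a (v i)) ∧ LinIndepConst D v := by
      intro n a ha
      obtain ⟨v, -, hsol, hli⟩ := hcl.2.2.1 n a ha
      exact ⟨v, hsol, hli⟩
    have hhyp : ∀ g ∈ Base, g ∈ M0 ∨ ∃ (n : ℕ) (a : Fin n → Ω), (∀ i, a i ∈ Fi N) ∧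
        (∀ i, a i ∈ M0) ∧ IsSol D a g := by
      intro b hb
      rcases hCf2 b hb with h | ⟨n, a, h1, h2, h3⟩
      · exact Or.inl (hM0C (Finset.mem_coe.2
          (Finset.mem_biUnion.2 ⟨⟨b, hb⟩, Finset.mem_attach _ _, h⟩)))
      · exact Or.inr ⟨n, a, h1, fun i => hM0C (Finset.mem_coe.2
          (Finset.mem_biUnion.2 ⟨⟨b, hb⟩, Finset.mem_attach _ _, h2 i⟩)), h3⟩
    obtain ⟨M', hMM', hipv', hst', hBase'⟩ :=
      pv_step_aux hD hconst hfull Base M0 hM0F hM0ipv hM0st hhyp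
    refine ⟨M', le_trans hM0F hMM', hipv', ?_, hst'⟩
    have hTallM' : ↑Tall ⊆ (M' : Set Ω) := by
      intro t ht
      have ht' : t ∈ Tall := Finset.mem_coe.1 ht
      rw [hgf2 t ht']
      refine dstable_iterate hst' (kf t ht') _ (hBase' (Finset.mem_coe.2 ?_))
      rw [hBase]
      exact Finset.mem_image.2 ⟨⟨t, ht'⟩, Finset.mem_attach _ _, rfl⟩
    intro x hx
    have hxX : x ∈ X := Finset.mem_coe.1 hx
    have hsub : (↑(T x hxX) : Set Ω) ⊆ (↑Tall : Set Ω) := by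
      intro z hz
      simp only [hTall, Finset.coe_biUnion, Set.mem_iUnion, Finset.mem_coe]
      exact ⟨⟨x, hxX⟩, Finset.mem_attach _ _, Finset.mem_coe.1 hz⟩
    have hle : Subfield.closure (↑(T x hxX) : Set Ω) ≤ M' :=
      Subfield.closure_le.2 (le_trans hsub hTallM')
    exact hle (hT2 x hxX)

lemma pv_finset_le_tower {Ω : Type*} [Field Ω] (Fi : ℕ → Subfield Ω)
    (hmono : Monotone Fi) (htop : (⋃ j, (Fi j : Set Ω)) = Set.univ) (X : Finset Ω) :
    ∃ N, ↑X ⊆ (Fi N : Set Ω) := by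
  classical
  induction X using Finset.induction_on with
  | empty => exact ⟨0, by simp⟩
  | @insert x S _ ih =>
    obtain ⟨N2, hN2⟩ := ih
    have hx : x ∈ ⋃ j, (Fi j : Set Ω) := htop ▸ Set.mem_univ x
    obtain ⟨N1, hN1⟩ := Set.mem_iUnion.1 hx
    refine ⟨max N1 N2, ?_⟩
    rw [Finset.coe_insert]
    exact Set.insert_subset (hmono (le_max_left N1 N2) hN1)
      (fun z hz => hmono (le_max_right N1 N2) (hN2 hz))

end PVAux

/-- every finitely generated differential subfield of `F_∞` containing `F`
is contained in an iterated Picard–Vessiot extension of `F` (inside `F_∞`). -/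
theorem stmt_5 {Ω : Type*} [Field Ω] [CharZero Ω] (D : Ω → Ω) (hD : IsDeriv D)
    (hAC : ConstAlgClosed D) (Fi : ℕ → Subfield Ω) (htow : IsPVTower D Fi)
    (htop : (⋃ j, (Fi j : Set Ω)) = Set.univ)
    (E : Subfield Ω) (X : Finset Ω) (hE : E = DiffGen D (↑(Fi 0) ∪ ↑X)) :
    ∃ M : Subfield Ω, IsIPV D (Fi 0) M ∧ E ≤ M := by
  have hconst : ∀ x : Ω, D x = 0 → x ∈ Fi 0 := by
    intro x hx
    have hx' : x ∈ ⋃ j, (Fi j : Set Ω) := htop ▸ Set.mem_univ x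
    obtain ⟨j, hj⟩ := Set.mem_iUnion.1 hx'
    have key : ∀ j, x ∈ Fi j → x ∈ Fi 0 := by
      intro j
      induction j with
      | zero => exact id
      | succ j ih => exact fun hj => ih ((htow j).2.1 x hj hx)
    exact key j hj
  have hmono : Monotone Fi := monotone_nat_of_le_succ (fun n => (htow n).1)
  obtain ⟨N, hXN⟩ := pv_finset_le_tower Fi hmono htop X
  obtain ⟨M, hMF, hipv, hXM, hst⟩ := pv_main_aux D hD Fi htow hconst N X hXN
  refine ⟨M, hipv, ?_⟩
  rw [hE]
  refine diffGen_le ?_ hst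
  rintro z (hz | hz)
  · exact hMF hz
  · exact hXM hz
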